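/- Let F be a field, n, k ∈ ℕ with k ≥ 2, and let w = {(α_j, β_j)}_{j∈[n]} ⊆ F² with α_1, …, α_n pairwise distinct. Let f(X) ∈ F[X] have degree at most k−1 and agree with w on more than √(2(k−1)n) coordinates, i.e., #{j ∈ [n] : f(α_j) = β_j} > √(2(k−1)n). Let R(X,Y) ∈ F[X,Y] be a nonzero polynomial of (1,k−1)-degree at most √(2(k−1)n) such that R(α_j, β_j) = 0 for every j with f(α_j) = β_j. Then R(X, f(X)) is the zero polynomial. -/

import Mathlib

/-!
STATEMENT 1: Let F be a field, n, k ∈ ℕ with k ≥ 2, and let w = {(α_j, β_j)}_{j∈[n]} ⊆ F² with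
α_1, …, α_n pairwise distinct. Let f(X) ∈ F[X] have degree at most k−1 and agree with w on more
than √(2(k−1)n) coordinates, i.e., #{j ∈ [n] : f(α_j) = β_j} > √(2(k−1)n). Let R(X,Y) ∈ F[X,Y]
be a nonzero polynomial of (1,k−1)-degree at most √(2(k−1)n) such that R(α_j, β_j) = 0 for
every j with f(α_j) = β_j. Then R(X, f(X)) is the zero polynomial.

Bivariate polynomials in F[X,Y] are represented as `Polynomial (Polynomial F)` with outer
variable Y and inner variable X; the coefficient of X^i·Y^j in R is `(R.coeff j).coeff i`.
Evaluation of R at a point (α,β) ∈ F² is `Polynomial.eval₂ (Polynomial.evalRingHom α) β R`.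
-/

theorem statement1 (F : Type*) [Field F] (n k : ℕ) (hk : 2 ≤ k)
    (α β : Fin n → F) (hα : Function.Injective α)
    (f : Polynomial F) (hf : f.natDegree ≤ k - 1)
    (hAgree : Real.sqrt (2 * ((k : ℝ) - 1) * (n : ℝ)) <
      (Nat.card {j : Fin n // Polynomial.eval (α j) f = β j} : ℝ))
    (R : Polynomial (Polynomial F)) (hR0 : R ≠ 0)
    (hRdeg : ∀ i j : ℕ, (R.coeff j).coeff i ≠ 0 →
      ((i + (k - 1) * j : ℕ) : ℝ) ≤ Real.sqrt (2 * ((k : ℝ) - 1) * (n : ℝ)))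
    (hRvanish : ∀ j : Fin n, Polynomial.eval (α j) f = β j →
      Polynomial.eval₂ (Polynomial.evalRingHom (α j)) (β j) R = 0) :
    Polynomial.eval f R = 0 := by
  classical
  by_contra hQ
  set D := Real.sqrt (2 * ((k : ℝ) - 1) * (n : ℝ)) with hD
  set Q := Polynomial.eval f R with hQdef
  set S : Finset (Fin n) := Finset.univ.filter (fun j => Polynomial.eval (α j) f = β j) with hS
  have hcard : (Nat.card {j : Fin n // Polynomial.eval (α j) f = β j}) = S.card := by
    rw [Nat.card_eq_fintype_card, Fintype.card_subtype]
  rw [hcard] at hAgree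
  -- degree bound on Q
  have hterm : ∀ j ∈ R.support, (R.coeff j * f ^ j).natDegree ≤ ⌊D⌋₊ := by
    intro j hj
    have hc : R.coeff j ≠ 0 := Polynomial.mem_support_iff.mp hj
    have hi : (R.coeff j).coeff (R.coeff j).natDegree ≠ 0 := by
      rw [← Polynomial.leadingCoeff]; exact Polynomial.leadingCoeff_ne_zero.mpr hc
    have hdeg := hRdeg _ _ hi
    have hnat : (R.coeff j * f ^ j).natDegree ≤ (R.coeff j).natDegree + (k - 1) * j := by
      calc (R.coeff j * f ^ j).natDegree
          ≤ (R.coeff j).natDegree + (f ^ j).natDegree := Polynomial.natDegree_mul_le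
        _ ≤ (R.coeff j).natDegree + (k - 1) * j := by
            rw [Polynomial.natDegree_pow]
            have h' : j * f.natDegree ≤ (k - 1) * j := by
              calc j * f.natDegree ≤ j * (k-1) := Nat.mul_le_mul_left j hf
                _ = (k-1) * j := Nat.mul_comm _ _
            omega
    refine Nat.le_floor ?_
    calc ((R.coeff j * f ^ j).natDegree : ℝ)
        ≤ (((R.coeff j).natDegree + (k - 1) * j : ℕ) : ℝ) := by exact_mod_cast hnat
      _ ≤ D := hdeg
  have hQsum : Q = ∑ j ∈ R.support, R.coeff j * f ^ j := by
    rw [hQdef, Polynomial.eval_eq_sum, Polynomial.sum_def]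
  have hQdeg : (Q.natDegree : ℝ) < S.card := by
    have h1 : Q.natDegree ≤ ⌊D⌋₊ := by
      rw [hQsum]; exact Polynomial.natDegree_sum_le_of_forall_le _ _ hterm
    have h2 : (⌊D⌋₊ : ℝ) ≤ D := Nat.floor_le (Real.sqrt_nonneg _)
    calc (Q.natDegree : ℝ) ≤ (⌊D⌋₊ : ℝ) := by exact_mod_cast h1
      _ ≤ D := h2
      _ < S.card := hAgree
  -- roots of Q
  have hroot : ∀ j ∈ S, Polynomial.eval (α j) Q = 0 := by
    intro j hj
    rw [hS, Finset.mem_filter] at hj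
    have hv := hRvanish j hj.2
    have : Polynomial.eval (α j) Q
        = Polynomial.eval₂ (Polynomial.evalRingHom (α j)) (Polynomial.eval (α j) f) R := by
      rw [hQdef]
      have := Polynomial.hom_eval₂ R (RingHom.id (Polynomial F))
        (Polynomial.evalRingHom (α j)) f
      simp only [RingHom.comp_id, Polynomial.coe_evalRingHom] at this
      exact this
    rw [this, hj.2, hv]
  have hZ : (S.image α).val ⊆ Q.roots := by
    intro x hx
    rw [Finset.mem_val, Finset.mem_image] at hx
    obtain ⟨j, hj, rfl⟩ := hx
    rw [Polynomial.mem_roots hQ]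
    exact hroot j hj
  have hcard2 : S.card ≤ Q.natDegree := by
    have := Polynomial.card_le_degree_of_subset_roots hZ
    rwa [Finset.card_image_of_injective _ hα] at this
  have : (S.card : ℝ) ≤ (Q.natDegree : ℝ) := by exact_mod_cast hcard2
  linarith
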